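/- Let ρ be positive semidefinite, P a projection with Image(P) contained in an appropriate subspace such that ker(ρ^{-1} # σ) ⊆ ker(ρ^{-1/2} P ρ P ρ^{-1/2}), κ = ‖ρ^{-1/2} P ρ^{1/2}‖_∞², and η the smallest nonzero eigenvalue of ρ^{-1} # σ, where P projects onto Image(ρ^{1/2} σ ρ^{1/2}). Then P ρ P ≤ (κ/η) · ρ^{1/2}(ρ^{-1} # σ)ρ^{1/2} in the Loewner order. -/

import Mathlib

open Matrix Kronecker
open scoped ComplexOrder

noncomputable section
attribute [local instance] Classical.propDecidable

/-- Moore–Penrose pseudoinverse of a square complex matrix. -/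
def pinv {n : Type*} [Fintype n] [DecidableEq n] (A : Matrix n n ℂ) : Matrix n n ℂ :=
  if h : ∃ B : Matrix n n ℂ,
      A * B * A = A ∧ B * A * B = B ∧ (A * B)ᴴ = A * B ∧ (B * A)ᴴ = B * A
  then h.choose else 0

/-- Positive semidefinite square root (junk value `0` if the matrix is not PSD). -/
def msqrt {n : Type*} [Fintype n] [DecidableEq n] (A : Matrix n n ℂ) : Matrix n n ℂ :=
  if h : A.PosSemidef then
    h.1.eigenvectorUnitary.1 * diagonal ((↑) ∘ (√·) ∘ h.1.eigenvalues) *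
      (star h.1.eigenvectorUnitary : Matrix n n ℂ)
  else 0

/-- `sgn(X) = U sgn(Σ) V*` for an SVD `X = U Σ V*`; equivalently `X (X* X)^{-1/2}`
with the Moore–Penrose pseudoinverse. -/
def msgn {n : Type*} [Fintype n] [DecidableEq n] (X : Matrix n n ℂ) : Matrix n n ℂ :=
  X * pinv (msqrt (Xᴴ * X))

/-- Matrix geometric mean `A # B = A^{1/2} (A^{-1/2} B A^{-1/2})^{1/2} A^{1/2}`
(with Moore–Penrose pseudoinverses). -/
def geo {n : Type*} [Fintype n] [DecidableEq n] (A B : Matrix n n ℂ) : Matrix n n ℂ :=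
  msqrt A * msqrt (pinv (msqrt A) * B * pinv (msqrt A)) * msqrt A

/-- The unnormalized maximally entangled state `|Ω⟩ = ∑ i, |i⟩ ⊗ |i⟩`. -/
def omegaVec (d : ℕ) : Fin d × Fin d → ℂ := fun p => if p.1 = p.2 then 1 else 0

/-- Reduced density matrix of `|C⟩⟨C|` on the first subsystem
(partial trace over the second subsystem). -/
def reducedA {d : ℕ} (C : Fin d × Fin d → ℂ) : Matrix (Fin d) (Fin d) ℂ :=
  Matrix.of fun i j => ∑ k, C (i, k) * star (C (j, k))

/-- Partial trace over the first subsystem of the operator `|D⟩⟨C|`. -/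
def trA {d : ℕ} (D C : Fin d × Fin d → ℂ) : Matrix (Fin d) (Fin d) ℂ :=
  Matrix.of fun j l => ∑ i, D (i, j) * star (C (i, l))

/-- `ℓ²→ℓ²` operator norm (largest singular value). -/
def opNorm {n : Type*} [Fintype n] [DecidableEq n] (A : Matrix n n ℂ) : ℝ :=
  ‖(Matrix.toEuclideanCLM (𝕜 := ℂ) A : EuclideanSpace ℂ n →L[ℂ] EuclideanSpace ℂ n)‖

/-- `P` is the orthogonal projection onto the image (column space) of `A`. -/
def IsOrthProjOnto {n : Type*} [Fintype n] [DecidableEq n] (P A : Matrix n n ℂ) : Prop :=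
  Pᴴ = P ∧ P * P = P ∧ LinearMap.range P.mulVecLin = LinearMap.range A.mulVecLin

/-- `η` is the smallest nonzero eigenvalue of the Hermitian matrix `M`. -/
def IsSmallestNonzeroEigenvalue {n : Type*} [Fintype n] [DecidableEq n]
    (M : Matrix n n ℂ) (η : ℝ) : Prop :=
  ∃ hM : M.IsHermitian, η ≠ 0 ∧ (∃ i, hM.eigenvalues i = η) ∧
    ∀ i, hM.eigenvalues i ≠ 0 → η ≤ hM.eigenvalues i

/-! ### Auxiliary lemmas -/

section Aux

variable {n : Type*} [Fintype n] [DecidableEq n]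

/-- The four Moore–Penrose conditions. -/
def IsMP (A B : Matrix n n ℂ) : Prop :=
  A * B * A = A ∧ B * A * B = B ∧ (A * B)ᴴ = A * B ∧ (B * A)ᴴ = B * A

lemma isMP_unique {A B C : Matrix n n ℂ} (hB : IsMP A B) (hC : IsMP A C) : B = C := by
  obtain ⟨hB1, hB2, hB3, hB4⟩ := hB
  obtain ⟨hC1, hC2, hC3, hC4⟩ := hC
  have hAB : A * B = A * C := by
    calc A * B = (A * B)ᴴ := hB3.symm
    _ = Bᴴ * Aᴴ := by rw [conjTranspose_mul]
    _ = Bᴴ * (A * C * A)ᴴ := by rw [hC1]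
    _ = (A*B)ᴴ * (A*C)ᴴ := by simp only [conjTranspose_mul, mul_assoc]
    _ = (A*B) * (A*C) := by rw [hB3, hC3]
    _ = (A*B*A) * C := by simp only [mul_assoc]
    _ = A * C := by rw [hB1]
  have hBA : B * A = C * A := by
    calc B * A = (B * A)ᴴ := hB4.symm
    _ = Aᴴ * Bᴴ := by rw [conjTranspose_mul]
    _ = (A * C * A)ᴴ * Bᴴ := by rw [hC1]
    _ = (C*A)ᴴ * (B*A)ᴴ := by simp only [conjTranspose_mul, mul_assoc]
    _ = (C*A) * (B*A) := by rw [hB4, hC4]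
    _ = C * (A*B*A) := by simp only [mul_assoc]
    _ = C * A := by rw [hB1]
  calc B = B * A * B := hB2.symm
  _ = B * (A * C) := by rw [mul_assoc, hAB]
  _ = (C * A) * C := by rw [← mul_assoc, hBA]
  _ = C := hC2

lemma isMP_pinv {A : Matrix n n ℂ} (h : ∃ B, IsMP A B) : IsMP A (pinv A) := by
  have h' : ∃ B : Matrix n n ℂ,
      A * B * A = A ∧ B * A * B = B ∧ (A * B)ᴴ = A * B ∧ (B * A)ᴴ = B * A := h
  show IsMP A (pinv A)
  rw [pinv, dif_pos h']
  exact h'.choose_spec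

lemma exists_isMP_of_isHermitian {A : Matrix n n ℂ} (hA : A.IsHermitian) :
    ∃ B, IsMP A B := by
  classical
  set U : Matrix n n ℂ := (hA.eigenvectorUnitary : Matrix n n ℂ) with hU
  have hU1 : star U * U = 1 := hA.eigenvectorUnitary.2.1
  set d : n → ℂ := RCLike.ofReal ∘ hA.eigenvalues with hd
  set e : n → ℂ := fun i => if hA.eigenvalues i = 0 then 0 else (d i)⁻¹ with he
  have hspec : A = U * diagonal d * star U := hA.spectral_theorem
  have key : ∀ f g : n → ℂ,
      (U * diagonal f * star U) * (U * diagonal g * star U) = U * diagonal (f * g) * star U := by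
    intro f g
    calc (U * diagonal f * star U) * (U * diagonal g * star U)
        = U * (diagonal f * ((star U * U) * (diagonal g * star U))) := by
          simp only [mul_assoc]
      _ = U * (diagonal f * diagonal g) * star U := by
          rw [hU1, one_mul]; simp only [mul_assoc]
      _ = U * diagonal (f * g) * star U := by rw [diagonal_mul_diagonal]; rfl
  have keyH : ∀ f : n → ℂ,
      (U * diagonal f * star U)ᴴ = U * diagonal (star f) * star U := by
    intro f
    simp only [star_eq_conjTranspose, conjTranspose_mul, conjTranspose_conjTranspose,
      diagonal_conjTranspose, mul_assoc]
  have hded : d * e * d = d := by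
    funext i
    simp only [Pi.mul_apply, hd, he, Function.comp_apply]
    by_cases h : hA.eigenvalues i = 0
    · simp [h]
    · have hdi : (hA.eigenvalues i : ℂ) ≠ 0 := by
        simpa using h
      field_simp [h]
      simp [h, hdi]
  have hede : e * d * e = e := by
    funext i
    simp only [Pi.mul_apply, hd, he, Function.comp_apply]
    by_cases h : hA.eigenvalues i = 0
    · simp [h]
    · have hdi : (hA.eigenvalues i : ℂ) ≠ 0 := by simpa using h
      field_simp [h]
      simp [h, hdi]
  have hde : ∀ i, d i * e i = if hA.eigenvalues i = 0 then 0 else 1 := by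
    intro i
    simp only [hd, he, Function.comp_apply]
    by_cases h : hA.eigenvalues i = 0
    · simp [h]
    · have hdi : (hA.eigenvalues i : ℂ) ≠ 0 := by simpa using h
      field_simp [h]
      simp [h, hdi]
  have hed : ∀ i, e i * d i = if hA.eigenvalues i = 0 then 0 else 1 := by
    intro i
    rw [mul_comm]; exact hde i
  have hsde : star (d * e) = d * e := by
    funext i
    show star (d i * e i) = d i * e i
    rw [hde i]; split_ifs <;> simp
  have hsed : star (e * d) = e * d := by
    funext i
    show star (e i * d i) = e i * d i
    rw [hed i]; split_ifs <;> simp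
  refine ⟨U * diagonal e * star U, ?_, ?_, ?_, ?_⟩
  · rw [hspec, key, key, hded]
  · rw [hspec, key, key, hede]
  · rw [hspec, key, keyH, hsde]
  · rw [hspec, key, keyH, hsed]

lemma isMP_pinv_of_isHermitian {A : Matrix n n ℂ} (hA : A.IsHermitian) : IsMP A (pinv A) :=
  isMP_pinv (exists_isMP_of_isHermitian hA)

lemma pinv_conjTranspose_of_isHermitian {A : Matrix n n ℂ} (hA : A.IsHermitian) :
    (pinv A)ᴴ = pinv A := by
  obtain ⟨h1, h2, h3, h4⟩ := isMP_pinv_of_isHermitian hA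
  set R := pinv A with hR
  have : IsMP A Rᴴ := by
    refine ⟨?_, ?_, ?_, ?_⟩
    · calc A * Rᴴ * A = (Aᴴ * R * Aᴴ)ᴴ := by
            simp only [conjTranspose_mul, conjTranspose_conjTranspose, mul_assoc]
      _ = A := by rw [hA.eq, h1, hA.eq]
    · calc Rᴴ * A * Rᴴ = (R * Aᴴ * R)ᴴ := by
            simp only [conjTranspose_mul, conjTranspose_conjTranspose, mul_assoc]
      _ = Rᴴ := by rw [hA.eq, h2]
    · calc (A * Rᴴ)ᴴ = R * Aᴴ := by simp [conjTranspose_mul]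
      _ = R * A := by rw [hA.eq]
      _ = (R * A)ᴴ := h4.symm
      _ = Aᴴ * Rᴴ := by rw [conjTranspose_mul]
      _ = A * Rᴴ := by rw [hA.eq]
    · calc (Rᴴ * A)ᴴ = Aᴴ * R := by simp [conjTranspose_mul]
      _ = A * R := by rw [hA.eq]
      _ = (A * R)ᴴ := h3.symm
      _ = Rᴴ * Aᴴ := by rw [conjTranspose_mul]
      _ = Rᴴ * A := by rw [hA.eq]
  exact isMP_unique this (isMP_pinv_of_isHermitian hA)

set_option maxHeartbeats 1000000 in
lemma core_ineq {G N : Matrix n n ℂ} (hG : G.PosSemidef) (hN : N.PosSemidef)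
    (κ η : ℝ) (hκ0 : 0 ≤ κ) (hη0 : 0 < η)
    (hM : G.IsHermitian)
    (hmin : ∀ i, hM.eigenvalues i ≠ 0 → η ≤ hM.eigenvalues i)
    (hker : ∀ x, G *ᵥ x = 0 → N *ᵥ x = 0)
    (hbound : ∀ x : n → ℂ, (star x ⬝ᵥ (N *ᵥ x)).re ≤ κ * ∑ i, Complex.normSq (x i)) :
    (((κ / η : ℝ) : ℂ) • G - N).PosSemidef := by
  classical
  set c : ℂ := ((κ / η : ℝ) : ℂ) with hc
  refine Matrix.PosSemidef.of_dotProduct_mulVec_nonneg ?_ ?_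
  · -- Hermitian
    show (c • G - N)ᴴ = c • G - N
    have h1 : (c • G)ᴴ = c • G := by
      rw [conjTranspose_smul, hG.1.eq]
      congr 1
      simp [hc]
    rw [conjTranspose_sub, h1, hN.1.eq]
  intro x
  set μ := hM.eigenvalues with hμ
  set U : Matrix n n ℂ := (hM.eigenvectorUnitary : Matrix n n ℂ) with hUdef
  have hU1 : star U * U = 1 := hM.eigenvectorUnitary.2.1
  have hU2 : U * star U = 1 := hM.eigenvectorUnitary.2.2
  set d : n → ℂ := RCLike.ofReal ∘ μ with hd
  have hspec : G = U * diagonal d * star U := hM.spectral_theorem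
  set y : n → ℂ := star U *ᵥ x with hy
  have hx : x = U *ᵥ y := by
    rw [hy, mulVec_mulVec, hU2, one_mulVec]
  set y1 : n → ℂ := fun i => if μ i = 0 then 0 else y i with hy1
  set x1 : n → ℂ := U *ᵥ y1 with hx1
  set x0 : n → ℂ := x - x1 with hx0
  have hGU : ∀ z : n → ℂ, G *ᵥ (U *ᵥ z) = U *ᵥ (diagonal d *ᵥ z) := by
    intro z
    rw [hspec, mulVec_mulVec, mul_assoc, mul_assoc, hU1, mul_one, ← mulVec_mulVec]
  have hGx0 : G *ᵥ x0 = 0 := by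
    have h0 : x0 = U *ᵥ (y - y1) := by
      rw [hx0, mulVec_sub, ← hx]
    rw [h0, hGU]
    have : diagonal d *ᵥ (y - y1) = 0 := by
      funext i
      rw [mulVec_diagonal]
      by_cases h : μ i = 0
      · have : d i = 0 := by simp [hd, h]
        simp [this]
      · have : (y - y1) i = 0 := by simp [hy1, h]
        simp [this]
    rw [this, mulVec_zero]
  have hNx0 : N *ᵥ x0 = 0 := hker _ hGx0
  have hqN : star x ⬝ᵥ (N *ᵥ x) = star x1 ⬝ᵥ (N *ᵥ x1) := by
    have hxs : x = x0 + x1 := by rw [hx0]; ring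
    have hNx : N *ᵥ x = N *ᵥ x1 := by
      conv_lhs => rw [hxs]
      rw [mulVec_add, hNx0, zero_add]
    have hcross : star x0 ⬝ᵥ (N *ᵥ x1) = 0 := by
      rw [dotProduct_mulVec]
      have h := star_mulVec (M := N) (v := x0)
      rw [hN.1.eq] at h
      rw [hNx0, star_zero] at h
      rw [← h, zero_dotProduct]
    rw [hNx]
    conv_lhs => rw [hxs]
    rw [star_add, add_dotProduct, hcross, zero_add]
  have hnorm : ∀ u : n → ℂ, (star u ⬝ᵥ u).re = ∑ i, Complex.normSq (u i) := by
    intro u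
    have : star u ⬝ᵥ u = ∑ i, (Complex.normSq (u i) : ℂ) := by
      simp [dotProduct, Complex.normSq_eq_conj_mul_self]
    rw [this]
    simp
  have hsum_eq : ∀ (u : n → ℂ) (w : n → ℂ), star (U *ᵥ u) ⬝ᵥ (U *ᵥ w) = star u ⬝ᵥ w := by
    intro u w
    rw [star_mulVec, ← star_eq_conjTranspose, dotProduct_mulVec, vecMul_vecMul, hU1, vecMul_one]
  have hx1y1 : star x1 ⬝ᵥ x1 = star y1 ⬝ᵥ y1 := by
    rw [hx1, hsum_eq]
  have hqG : (star x ⬝ᵥ (G *ᵥ x)).re = ∑ i, μ i * Complex.normSq (y i) := by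
    have h1 : star x ⬝ᵥ (G *ᵥ x) = star y ⬝ᵥ (diagonal d *ᵥ y) := by
      conv_lhs => rw [hx, hGU, hsum_eq]
    rw [h1]
    have h2 : star y ⬝ᵥ (diagonal d *ᵥ y) = ∑ i, ((μ i : ℂ) * Complex.normSq (y i)) := by
      simp only [dotProduct, mulVec_diagonal, Pi.star_apply]
      congr 1
      funext i
      rw [Complex.normSq_eq_conj_mul_self]
      simp [hd]
      ring
    rw [h2]
    simp
  have ht : ∑ i, Complex.normSq (x1 i) = ∑ i, Complex.normSq (y1 i) := by
    rw [← hnorm x1, hx1y1, hnorm y1]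
  have hbt : (star x ⬝ᵥ (N *ᵥ x)).re ≤ κ * ∑ i, Complex.normSq (y1 i) := by
    rw [hqN, ← ht]
    exact hbound x1
  have hlow : η * ∑ i, Complex.normSq (y1 i) ≤ (star x ⬝ᵥ (G *ᵥ x)).re := by
    rw [hqG, Finset.mul_sum]
    apply Finset.sum_le_sum
    intro i _
    by_cases h : μ i = 0
    · have h1 : y1 i = 0 := by simp [hy1, h]
      rw [h1, h]
      simp
    · have h1 : y1 i = y i := by simp [hy1, h]
      rw [h1]
      exact mul_le_mul_of_nonneg_right (hmin i h) (Complex.normSq_nonneg _)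
  have himG : (star x ⬝ᵥ (G *ᵥ x)).im = 0 := (Complex.nonneg_iff.mp (hG.dotProduct_mulVec_nonneg x)).2.symm
  have himN : (star x ⬝ᵥ (N *ᵥ x)).im = 0 := (Complex.nonneg_iff.mp (hN.dotProduct_mulVec_nonneg x)).2.symm
  have hmain : (star x ⬝ᵥ (N *ᵥ x)).re ≤ (κ / η) * (star x ⬝ᵥ (G *ᵥ x)).re := by
    calc (star x ⬝ᵥ (N *ᵥ x)).re ≤ κ * ∑ i, Complex.normSq (y1 i) := hbt
    _ = (κ / η) * (η * ∑ i, Complex.normSq (y1 i)) := by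
        rw [← mul_assoc, div_mul_cancel₀ _ hη0.ne']
    _ ≤ (κ / η) * (star x ⬝ᵥ (G *ᵥ x)).re :=
        mul_le_mul_of_nonneg_left hlow (div_nonneg hκ0 hη0.le)
  rw [sub_mulVec, dotProduct_sub, smul_mulVec, dotProduct_smul]
  rw [Complex.nonneg_iff]
  constructor
  · simp only [Complex.sub_re, smul_eq_mul, Complex.mul_re, Complex.ofReal_re,
      Complex.ofReal_im, himG, zero_mul, mul_zero, sub_zero]
    have hcre : c.re = κ / η := by simp [hc]
    rw [hcre]
    linarith [hmain]
  · simp only [Complex.sub_im, smul_eq_mul, Complex.mul_im, Complex.ofReal_re,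
      Complex.ofReal_im, himG, himN, zero_mul, mul_zero, add_zero, sub_zero]
    have hcim : c.im = 0 := by simp [hc]
    rw [hcim, zero_mul, zero_add]

lemma msqrt_posSemidef (A : Matrix n n ℂ) : (msqrt A).PosSemidef := by
  by_cases hA : A.PosSemidef
  · rw [msqrt, dif_pos hA]
    have hD : (diagonal ((↑) ∘ (√·) ∘ hA.1.eigenvalues) : Matrix n n ℂ).PosSemidef :=
      posSemidef_diagonal_iff.mpr fun i => Complex.zero_le_real.mpr (Real.sqrt_nonneg _)
    exact hD.mul_mul_conjTranspose_same (hA.1.eigenvectorUnitary : Matrix n n ℂ)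
  · rw [msqrt, dif_neg hA]; exact Matrix.PosSemidef.zero

lemma msqrt_mul_self {A : Matrix n n ℂ} (hA : A.PosSemidef) : msqrt A * msqrt A = A := by
  rw [msqrt, dif_pos hA]
  set U : Matrix n n ℂ := (hA.1.eigenvectorUnitary : Matrix n n ℂ) with hU
  have hU1 : star U * U = 1 := hA.1.eigenvectorUnitary.2.1
  have hs := hA.1.spectral_theorem
  rw [Unitary.conjStarAlgAut_apply] at hs
  rw [show U * diagonal ((↑) ∘ (√·) ∘ hA.1.eigenvalues) * star U *
      (U * diagonal ((↑) ∘ (√·) ∘ hA.1.eigenvalues) * star U) =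
      U * (diagonal ((↑) ∘ (√·) ∘ hA.1.eigenvalues) * (star U * U) *
      diagonal ((↑) ∘ (√·) ∘ hA.1.eigenvalues)) * star U by simp only [mul_assoc],
    hU1, mul_one, diagonal_mul_diagonal]
  have hd : (diagonal fun i => ((↑) ∘ (√·) ∘ hA.1.eigenvalues) i *
      ((↑) ∘ (√·) ∘ hA.1.eigenvalues) i : Matrix n n ℂ) =
      diagonal (RCLike.ofReal ∘ hA.1.eigenvalues) := by
    congr 1
    funext i
    simp only [Function.comp_apply]
    rw [← Complex.ofReal_mul, Real.mul_self_sqrt (hA.eigenvalues_nonneg i)]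
    rfl
  rw [hd]
  exact hs.symm

lemma geo_posSemidef (A B : Matrix n n ℂ) : (geo A B).PosSemidef := by
  have h := (msqrt_posSemidef (pinv (msqrt A) * B * pinv (msqrt A))).mul_mul_conjTranspose_same
    (msqrt A)
  rw [(msqrt_posSemidef A).1.eq] at h
  exact h

lemma eq_of_mulVec_eq {M N : Matrix n n ℂ} (h : ∀ v, M *ᵥ v = N *ᵥ v) : M = N := by
  ext i j
  have := congrFun (h (Pi.single j 1)) i
  simpa using this

lemma dot_star_self_re (u : n → ℂ) : (star u ⬝ᵥ u).re = ∑ i, Complex.normSq (u i) := by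
  have : star u ⬝ᵥ u = ∑ i, (Complex.normSq (u i) : ℂ) := by
    simp [dotProduct, Complex.normSq_eq_conj_mul_self]
  rw [this]
  simp

lemma sum_normSq_eq_norm_sq (u : n → ℂ) :
    ∑ i, Complex.normSq (u i) = ‖(WithLp.equiv 2 (n → ℂ)).symm u‖ ^ 2 := by
  rw [EuclideanSpace.norm_eq, Real.sq_sqrt (by positivity)]
  refine Finset.sum_congr rfl fun i _ => ?_
  simp [Complex.normSq_eq_norm_sq]

set_option synthInstance.maxHeartbeats 400000 in
lemma opNorm_bound (X : Matrix n n ℂ) (x : n → ℂ) :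
    ∑ i, Complex.normSq ((Xᴴ *ᵥ x) i) ≤ (opNorm X) ^ 2 * ∑ i, Complex.normSq (x i) := by
  rw [sum_normSq_eq_norm_sq, sum_normSq_eq_norm_sq]
  have h1 : (WithLp.equiv 2 (n → ℂ)).symm (Xᴴ *ᵥ x)
      = (toEuclideanCLM (𝕜 := ℂ) Xᴴ) ((WithLp.equiv 2 (n → ℂ)).symm x) := by
    rfl
  rw [h1]
  have h2 : toEuclideanCLM (𝕜 := ℂ) Xᴴ = star (toEuclideanCLM (𝕜 := ℂ) X) := by
    rw [← map_star, star_eq_conjTranspose]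
  rw [h2]
  have h3 : ‖star (toEuclideanCLM (𝕜 := ℂ) X) ((WithLp.equiv 2 (n → ℂ)).symm x)‖
      ≤ opNorm X * ‖(WithLp.equiv 2 (n → ℂ)).symm x‖ := by
    calc ‖star (toEuclideanCLM (𝕜 := ℂ) X) ((WithLp.equiv 2 (n → ℂ)).symm x)‖
        ≤ ‖star (toEuclideanCLM (𝕜 := ℂ) X)‖ * ‖(WithLp.equiv 2 (n → ℂ)).symm x‖ :=
          ContinuousLinearMap.le_opNorm _ _
    _ = opNorm X * ‖(WithLp.equiv 2 (n → ℂ)).symm x‖ := by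
          rw [ContinuousLinearMap.star_eq_adjoint,
            ContinuousLinearMap.adjoint.norm_map (toEuclideanCLM (𝕜 := ℂ) X)]; rfl
  calc ‖star (toEuclideanCLM (𝕜 := ℂ) X) ((WithLp.equiv 2 (n → ℂ)).symm x)‖ ^ 2
      ≤ (opNorm X * ‖(WithLp.equiv 2 (n → ℂ)).symm x‖) ^ 2 :=
        pow_le_pow_left₀ (norm_nonneg _) h3 2
  _ = (opNorm X) ^ 2 * ‖(WithLp.equiv 2 (n → ℂ)).symm x‖ ^ 2 := by ring

end Aux

set_option maxHeartbeats 1000000 in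
theorem obliqueness_spectral_gap_bound {n : Type*} [Fintype n] [DecidableEq n]
    (ρ σ P : Matrix n n ℂ) (hρ : ρ.PosSemidef) (hσ : σ.PosSemidef)
    (hP : IsOrthProjOnto P (msqrt ρ * σ * msqrt ρ))
    (hker : LinearMap.ker (geo (pinv ρ) σ).mulVecLin ≤
      LinearMap.ker (pinv (msqrt ρ) * P * ρ * P * pinv (msqrt ρ)).mulVecLin)
    (κ η : ℝ)
    (hκ : κ = (opNorm (pinv (msqrt ρ) * P * msqrt ρ)) ^ 2)
    (hη : IsSmallestNonzeroEigenvalue (geo (pinv ρ) σ) η) :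
    (((κ / η : ℝ) : ℂ) • (msqrt ρ * geo (pinv ρ) σ * msqrt ρ)
        - P * ρ * P).PosSemidef := by
  obtain ⟨hPh, hPP, hPrange⟩ := hP
  obtain ⟨hM, hηne, ⟨i0, hi0⟩, hmin⟩ := hη
  have hSps : (msqrt ρ).PosSemidef := msqrt_posSemidef ρ
  have hSh : (msqrt ρ)ᴴ = msqrt ρ := hSps.1
  have hSS : msqrt ρ * msqrt ρ = ρ := msqrt_mul_self hρ
  obtain ⟨h1, h2, h3, h4⟩ := isMP_pinv_of_isHermitian hSps.1
  have hRh : (pinv (msqrt ρ))ᴴ = pinv (msqrt ρ) := pinv_conjTranspose_of_isHermitian hSps.1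
  have hGps : (geo (pinv ρ) σ).PosSemidef := geo_posSemidef _ _
  have hη0 : 0 < η := by
    have hnn : (0:ℝ) ≤ hM.eigenvalues i0 := hGps.eigenvalues_nonneg i0
    rw [hi0] at hnn
    exact lt_of_le_of_ne hnn (Ne.symm hηne)
  have hκ0 : 0 ≤ κ := by rw [hκ]; positivity
  set S := msqrt ρ with hSdef
  set R := pinv S with hRdef
  set X := R * P * S with hXdef
  have hXH : Xᴴ = S * (P * R) := by
    rw [hXdef, conjTranspose_mul, conjTranspose_mul, hSh, hPh, hRh]
  set N := R * P * ρ * P * R with hNdef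
  have hXX : X * Xᴴ = N := by
    rw [hXdef, hXH, hNdef, ← hSS]
    simp only [mul_assoc]
  have hNps : N.PosSemidef := by
    rw [← hXX]
    exact Matrix.posSemidef_self_mul_conjTranspose X
  have hker' : ∀ x, (geo (pinv ρ) σ) *ᵥ x = 0 → N *ᵥ x = 0 := by
    intro x hx
    have hmem : x ∈ LinearMap.ker (geo (pinv ρ) σ).mulVecLin := by
      rw [LinearMap.mem_ker, mulVecLin_apply]; exact hx
    have := hker hmem
    rw [LinearMap.mem_ker, mulVecLin_apply] at this
    exact this
  have hbound : ∀ x : n → ℂ, (star x ⬝ᵥ (N *ᵥ x)).re ≤ κ * ∑ i, Complex.normSq (x i) := by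
    intro x
    have hNv : N *ᵥ x = X *ᵥ (Xᴴ *ᵥ x) := by rw [mulVec_mulVec, hXX]
    have hsx : star x ᵥ* X = star (Xᴴ *ᵥ x) := by
      rw [star_mulVec, conjTranspose_conjTranspose]
    rw [hNv, dotProduct_mulVec, hsx, dot_star_self_re, hκ]
    exact opNorm_bound X x
  have hcore : (((κ / η : ℝ) : ℂ) • (geo (pinv ρ) σ) - N).PosSemidef :=
    core_ineq hGps hNps κ η hκ0 hη0 hM hmin hker' hbound
  have hconj := hcore.mul_mul_conjTranspose_same S
  rw [hSh] at hconj
  have hSRP : S * R * P = P := by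
    apply eq_of_mulVec_eq
    intro v
    have hmem : P *ᵥ v ∈ LinearMap.range (S * σ * S).mulVecLin := by
      rw [← hPrange]
      exact ⟨v, by rw [mulVecLin_apply]⟩
    obtain ⟨w, hw⟩ := hmem
    rw [mulVecLin_apply] at hw
    have key : (S * R) *ᵥ (P *ᵥ v) = P *ᵥ v := by
      rw [← hw, mulVec_mulVec]
      have hSRS : S * R * (S * σ * S) = S * σ * S := by
        calc S * R * (S * σ * S) = (S * R * S) * (σ * S) := by simp only [mul_assoc]
        _ = S * (σ * S) := by rw [h1]
        _ = S * σ * S := by rw [mul_assoc]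
      rw [hSRS]
    calc (S * R * P) *ᵥ v = (S * R) *ᵥ (P *ᵥ v) := by rw [mulVec_mulVec]
    _ = P *ᵥ v := key
  have hPRS : P * (R * S) = P := by
    have h := congrArg conjTranspose hSRP
    rw [conjTranspose_mul, conjTranspose_mul, hSh, hRh, hPh] at h
    exact h
  have halg : S * ((((κ / η : ℝ) : ℂ) • (geo (pinv ρ) σ) - N)) * S
      = ((κ / η : ℝ) : ℂ) • (S * geo (pinv ρ) σ * S) - P * ρ * P := by
    rw [mul_sub, sub_mul]
    congr 1
    · rw [mul_smul_comm, smul_mul_assoc]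
    · rw [hNdef]
      calc S * (R * P * ρ * P * R) * S = (S * R * P) * (ρ * (P * (R * S))) := by
            simp only [mul_assoc]
      _ = P * (ρ * P) := by rw [hSRP, hPRS]
      _ = P * ρ * P := by rw [mul_assoc]
  rw [← halg]
  exact hconj
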